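/- arXiv:2304.08090 — 2 statements merged into one kernel-verified Lean document; each statement's English description precedes it below -/
import Mathlib

section
/- Let Ω ⊂ ℝ^d be a compact set, let f₁,…,f_N : Ω → ℝ be continuous, linearly independent functions, and let F = span(f₁,…,f_N). Assume F satisfies the Krein condition (there exists f ∈ F that does not vanish anywhere on Ω) and that L : F → ℝ is a positive linear functional, i.e. L(f) > 0 for every f ∈ F with f ≥ 0 on Ω and f not identically zero on Ω. If (P_i)_{i≥1} is a sequence that is dense in Ω, then there exists m such that the set X_m = {P₁,…,P_m} is a Tchakaloff set: there exist ν ≤ N, nodes Z₁,…,Z_ν ∈ X_m and weights w₁,…,w_ν > 0 such that L(f) = Σ_{k=1}^{ν} w_k f(Z_k) for every f ∈ F. -/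
open Finset

section aux

variable {ι : Type*} {E : Type*} [AddCommGroup E] [Module ℝ E]

/-- Conic Carathéodory: a nonnegative combination over a finset equals a positive
combination over a linearly independent subset. -/
theorem cone_caratheodory (u : ι → E) :
    ∀ (n : ℕ) (s : Finset ι), s.card ≤ n → ∀ w : ι → ℝ, (∀ i ∈ s, 0 ≤ w i) →
    ∃ t : Finset ι, t ⊆ s ∧ LinearIndependent ℝ (fun i : t => u (i : ι)) ∧
      ∃ w' : ι → ℝ, (∀ i ∈ t, 0 < w' i) ∧ ∑ i ∈ t, w' i • u i = ∑ i ∈ s, w i • u i := by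
  intro n
  induction n with
  | zero =>
      intro s hs w _
      have hse : s = ∅ := Finset.card_eq_zero.mp (Nat.le_zero.mp hs)
      subst hse
      refine ⟨∅, subset_rfl, ?_, w, by simp, rfl⟩
      have : IsEmpty ((∅ : Finset ι) : Type _) := by
        simp [Finset.isEmpty_coe_sort]
        exact ⟨fun x => x.2⟩
      exact linearIndependent_empty_type
  | succ n IH =>
      intro s hs w hw
      classical
      by_cases hss : s.filter (fun i => 0 < w i) = s
      · -- all weights positive
        by_cases hli : LinearIndependent ℝ (fun i : s => u (i : ι))
        · refine ⟨s, subset_rfl, hli, w, ?_, rfl⟩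
          intro i hi
          have := Finset.mem_filter.mp (hss ▸ hi)
          exact this.2
        · obtain ⟨g, hg0, i₁, hgi₁⟩ := Fintype.not_linearIndependent_iff.mp hli
          set c : ι → ℝ := fun i => if h : i ∈ s then g ⟨i, h⟩ else 0 with hc
          have hcs : ∀ i : s, c (i : ι) = g i := by
            intro i; simp [hc]
          have hc0 : ∑ i ∈ s, c i • u i = 0 := by
            rw [← Finset.sum_coe_sort s (fun i => c i • u i)]
            calc (∑ i : s, c (i : ι) • u (i : ι)) = ∑ i : s, g i • u (i : ι) := by
                  refine Finset.sum_congr rfl fun i _ => by rw [hcs]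
              _ = 0 := hg0
          -- pick a sign so that some coefficient is positive
          have hkey : ∀ c' : ι → ℝ, (∑ i ∈ s, c' i • u i = 0) → (∃ i ∈ s, 0 < c' i) →
              ∃ t : Finset ι, t ⊆ s ∧ LinearIndependent ℝ (fun i : t => u (i : ι)) ∧
                ∃ w' : ι → ℝ, (∀ i ∈ t, 0 < w' i) ∧
                  ∑ i ∈ t, w' i • u i = ∑ i ∈ s, w i • u i := by
            intro c' hc'0 hpos
            set T := s.filter (fun i => 0 < c' i) with hT
            have hTne : T.Nonempty := by
              obtain ⟨i, hi, hci⟩ := hpos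
              exact ⟨i, Finset.mem_filter.mpr ⟨hi, hci⟩⟩
            obtain ⟨i₀, hi₀T, hmin⟩ := T.exists_min_image (fun i => w i / c' i) hTne
            have hi₀s : i₀ ∈ s := (Finset.mem_filter.mp hi₀T).1
            have hc'i₀ : 0 < c' i₀ := (Finset.mem_filter.mp hi₀T).2
            set τ := w i₀ / c' i₀ with hτ
            have hτ0 : 0 ≤ τ := div_nonneg (hw i₀ hi₀s) hc'i₀.le
            set w'' : ι → ℝ := fun i => w i - τ * c' i with hw''
            have hw''0 : ∀ i ∈ s, 0 ≤ w'' i := by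
              intro i hi
              by_cases hci : 0 < c' i
              · have hiT : i ∈ T := Finset.mem_filter.mpr ⟨hi, hci⟩
                have := hmin i hiT
                have : τ * c' i ≤ w i := by
                  rw [hτ]
                  calc w i₀ / c' i₀ * c' i ≤ w i / c' i * c' i := by
                        exact mul_le_mul_of_nonneg_right (hmin i hiT) hci.le
                    _ = w i := div_mul_cancel₀ _ (ne_of_gt hci)
                simp [hw'']; linarith
              · have : τ * c' i ≤ 0 :=
                  mul_nonpos_of_nonneg_of_nonpos hτ0 (not_lt.mp hci)
                have := hw i hi
                simp [hw'']; linarith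
            have hw''i₀ : w'' i₀ = 0 := by
              simp only [hw'', hτ]
              field_simp
              ring
            have hsum'' : ∑ i ∈ s, w'' i • u i = ∑ i ∈ s, w i • u i := by
              simp only [hw'', sub_smul, Finset.sum_sub_distrib]
              have : ∑ i ∈ s, (τ * c' i) • u i = τ • ∑ i ∈ s, c' i • u i := by
                rw [Finset.smul_sum]
                exact Finset.sum_congr rfl fun i _ => by rw [smul_smul]
              rw [this, hc'0, smul_zero, sub_zero]
            have hcard : (s.erase i₀).card ≤ n := by
              have := Finset.card_erase_of_mem hi₀s
              omega
            obtain ⟨t, hts, hli', w', hw', hsum'⟩ :=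
              IH (s.erase i₀) hcard w'' (fun i hi => hw''0 i (Finset.mem_of_mem_erase hi))
            refine ⟨t, hts.trans (Finset.erase_subset _ _), hli', w', hw', ?_⟩
            rw [hsum']
            rw [← hsum'']
            rw [← Finset.add_sum_erase s (fun i => w'' i • u i) hi₀s, hw''i₀, zero_smul,
              zero_add]
          by_cases hsign : 0 < c (i₁ : ι)
          · exact hkey c hc0 ⟨i₁, i₁.2, hsign⟩
          · refine hkey (-c) ?_ ⟨i₁, i₁.2, ?_⟩
            · simp only [Pi.neg_apply, neg_smul, Finset.sum_neg_distrib, hc0, neg_zero]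
            · have : c (i₁ : ι) ≠ 0 := by rw [hcs]; exact hgi₁
              simp only [Pi.neg_apply]
              cases lt_or_gt_of_ne this with
              | inl h => linarith
              | inr h => exact absurd h hsign
      · -- some weight is zero: drop it
        set s' := s.filter (fun i => 0 < w i) with hs'
        have hsub : s' ⊆ s := Finset.filter_subset _ _
        have hssub : s' ⊂ s := ssubset_of_subset_of_ne hsub hss
        have hcard : s'.card ≤ n := by
          have := Finset.card_lt_card hssub
          omega
        obtain ⟨t, hts, hli, w', hw', hsum⟩ :=
          IH s' hcard w (fun i hi => hw i (hsub hi))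
        refine ⟨t, hts.trans hsub, hli, w', hw', ?_⟩
        rw [hsum]
        refine Finset.sum_subset hsub ?_
        intro i hi hni
        have : ¬ 0 < w i := fun h => hni (Finset.mem_filter.mpr ⟨hi, h⟩)
        have : w i = 0 := le_antisymm (not_lt.mp this) (hw i hi)
        rw [this, zero_smul]

end aux



variable {ι : Type*} {n : ℕ}

theorem coneLI_closed (u : ι → (Fin n → ℝ)) (t : Finset ι)
    (hli : LinearIndependent ℝ (fun i : t => u (i : ι))) :
    IsClosed {x : Fin n → ℝ | ∃ w : ι → ℝ, (∀ i ∈ t, 0 ≤ w i) ∧ x = ∑ i ∈ t, w i • u i} := by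
  classical
  let φ : (t → ℝ) →ₗ[ℝ] (Fin n → ℝ) :=
    ∑ i : t, (LinearMap.proj i).smulRight (u (i : ι))
  have hφ : ∀ ω : t → ℝ, φ ω = ∑ i : t, ω i • u (i : ι) := by
    intro ω
    simp [φ, LinearMap.sum_apply]
  have hker : LinearMap.ker φ = ⊥ := by
    rw [LinearMap.ker_eq_bot']
    intro ω hω
    rw [hφ] at hω
    exact funext (Fintype.linearIndependent_iff.mp hli ω hω)
  have hce := LinearMap.isClosedEmbedding_of_injective hker
  have himg : {x : Fin n → ℝ | ∃ w : ι → ℝ, (∀ i ∈ t, 0 ≤ w i) ∧ x = ∑ i ∈ t, w i • u i}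
      = φ '' {ω : t → ℝ | ∀ i, 0 ≤ ω i} := by
    ext x
    constructor
    · rintro ⟨w, hw, rfl⟩
      refine ⟨fun i => w (i : ι), fun i => hw _ i.2, ?_⟩
      rw [hφ]
      exact (Finset.sum_coe_sort t (fun i => w i • u i)).symm ▸ rfl
    · rintro ⟨ω, hω, rfl⟩
      refine ⟨fun i => if h : i ∈ t then ω ⟨i, h⟩ else 0, ?_, ?_⟩
      · intro i hi; simp [hi]; exact hω _
      · rw [hφ, ← Finset.sum_coe_sort t
          (fun i => (if h : i ∈ t then ω ⟨i, h⟩ else 0) • u i)]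
        exact Finset.sum_congr rfl fun i _ => by simp
  rw [himg]
  refine hce.isClosedMap _ ?_
  have : {ω : t → ℝ | ∀ i, 0 ≤ ω i} = ⋂ i : t, {ω : t → ℝ | 0 ≤ ω i} := by
    ext ω; simp [Set.mem_iInter]
  rw [this]
  exact isClosed_iInter fun i => isClosed_le continuous_const (continuous_apply i)

theorem cone_closed (u : ι → (Fin n → ℝ)) (s : Finset ι) :
    IsClosed {x : Fin n → ℝ | ∃ w : ι → ℝ, (∀ i ∈ s, 0 ≤ w i) ∧ x = ∑ i ∈ s, w i • u i} := by
  classical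
  have hdecomp : {x : Fin n → ℝ | ∃ w : ι → ℝ, (∀ i ∈ s, 0 ≤ w i) ∧ x = ∑ i ∈ s, w i • u i}
      = ⋃ t ∈ {t : Finset ι | t ⊆ s ∧ LinearIndependent ℝ (fun i : t => u (i : ι))},
          {x : Fin n → ℝ | ∃ w : ι → ℝ, (∀ i ∈ t, 0 ≤ w i) ∧ x = ∑ i ∈ t, w i • u i} := by
    ext x
    simp only [Set.mem_iUnion, Set.mem_setOf_eq]
    constructor
    · rintro ⟨w, hw, rfl⟩
      obtain ⟨t, hts, hli, w', hw', hsum⟩ := cone_caratheodory u s.card s le_rfl w hw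
      exact ⟨t, ⟨hts, hli⟩, w', fun i hi => (hw' i hi).le, hsum.symm⟩
    · rintro ⟨t, ⟨hts, _⟩, w, hw, rfl⟩
      refine ⟨fun i => if i ∈ t then w i else 0, ?_, ?_⟩
      · intro i _
        by_cases h : i ∈ t
        · simpa [h] using hw i h
        · simp [h]
      · rw [← Finset.sum_subset hts (fun i _ hit => by simp [hit])]
        exact (Finset.sum_congr rfl fun i hi => by simp [hi]).symm
  rw [hdecomp]
  refine Set.Finite.isClosed_biUnion ?_ ?_
  · exact (s.powerset.finite_toSet).subset fun t ht => Finset.mem_coe.mpr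
      (Finset.mem_powerset.mpr ht.1)
  · exact fun t ht => coneLI_closed u t ht.2



/-- **Davis–Wilhelmsen theorem.** Let `Ω ⊂ ℝ^d` be compact, `f₁,…,f_N` continuous
linearly independent functions on `Ω`, `F = span(f₁,…,f_N)` satisfying the Krein
condition, and `L` a positive linear functional on `F`. If `(P_i)` is a dense
sequence in `Ω`, then for all sufficiently large `m` the set `X_m = {P₀,…,P_m}`
is a Tchakaloff set: there are `ν ≤ N` nodes `Z_k ∈ X_m` and positive weights
`w_k` with `L(f) = Σ w_k f(Z_k)` for all `f ∈ F`. -/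
theorem davis_wilhelmsen
    {d N : ℕ} (Ω : Set (EuclideanSpace ℝ (Fin d))) (hΩ : IsCompact Ω)
    (f : Fin N → ↥Ω → ℝ) (hf_cont : ∀ j, Continuous (f j))
    (hf_li : LinearIndependent ℝ f)
    (hKrein : ∃ g ∈ Submodule.span ℝ (Set.range f), ∀ x : ↥Ω, g x ≠ 0)
    (L : (↥Ω → ℝ) →ₗ[ℝ] ℝ)
    (hLpos : ∀ g ∈ Submodule.span ℝ (Set.range f),
      (∀ x, 0 ≤ g x) → (∃ x, g x ≠ 0) → 0 < L g)
    (P : ℕ → ↥Ω) (hP : Dense (Set.range P)) :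
    ∃ m₀ : ℕ, ∀ m ≥ m₀, ∃ ν : ℕ, ν ≤ N ∧ ∃ (Z : Fin ν → ↥Ω) (w : Fin ν → ℝ),
      (∀ k, ∃ i ≤ m, Z k = P i) ∧ (∀ k, 0 < w k) ∧
      ∀ g ∈ Submodule.span ℝ (Set.range f), L g = ∑ k, w k * g (Z k) := by
  classical
  set v : ℕ → (Fin N → ℝ) := fun i j => f j (P i) with hv
  set ℓ : Fin N → ℝ := fun j => L (f j) with hℓ
  set S : ℕ → Set (Fin N → ℝ) := fun m =>
    {x | ∃ w : ℕ → ℝ, (∀ i ∈ Finset.range (m+1), 0 ≤ w i) ∧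
      x = ∑ i ∈ Finset.range (m+1), w i • v i} with hS
  have hS0 : ∀ m, (0 : Fin N → ℝ) ∈ S m := fun m => ⟨0, by simp, by simp⟩
  have hSconv : ∀ m, Convex ℝ (S m) := by
    intro m
    rintro x ⟨wx, hwx, rfl⟩ y ⟨wy, hwy, rfl⟩ a b ha hb hab
    refine ⟨fun i => a * wx i + b * wy i,
      fun i hi => add_nonneg (mul_nonneg ha (hwx i hi)) (mul_nonneg hb (hwy i hi)), ?_⟩
    simp only [add_smul, mul_smul, Finset.sum_add_distrib, Finset.smul_sum]
  have hSsmul : ∀ (m : ℕ) (c : ℝ), 0 ≤ c → ∀ x ∈ S m, c • x ∈ S m := by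
    rintro m c hc x ⟨w, hw, rfl⟩
    refine ⟨fun i => c * w i, fun i hi => mul_nonneg hc (hw i hi), ?_⟩
    rw [Finset.smul_sum]
    exact Finset.sum_congr rfl fun i _ => (mul_smul _ _ _).symm
  have hSv : ∀ (m i : ℕ), i ≤ m → v i ∈ S m := by
    intro m i him
    refine ⟨fun k => if k = i then 1 else 0, fun k _ => by by_cases h : k = i <;> simp [h], ?_⟩
    symm
    simp only [ite_smul, one_smul, zero_smul, Finset.sum_ite_eq', Finset.mem_range]
    rw [if_pos (Nat.lt_succ_of_le him)]
  have hSclosed : ∀ m, IsClosed (S m) := fun m => cone_closed v (Finset.range (m+1))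
  -- Main claim: ℓ belongs to some S m₀.
  have hkey : ∃ m₀, ℓ ∈ S m₀ := by
    by_contra hcon
    push_neg at hcon
    have hsep : ∀ m, ∃ (F : (Fin N → ℝ) →L[ℝ] ℝ) (c : ℝ), F ℓ < c ∧ ∀ b ∈ S m, c < F b :=
      fun m => geometric_hahn_banach_point_closed (hSconv m) (hSclosed m) (hcon m)
    choose F c hFl hFb using hsep
    have hc0 : ∀ m, c m < 0 := fun m => by simpa using hFb m 0 (hS0 m)
    have hFpos : ∀ m, ∀ x ∈ S m, 0 ≤ F m x := by
      intro m x hx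
      by_contra hneg
      push_neg at hneg
      obtain ⟨k, hk⟩ := exists_nat_gt (c m / F m x)
      have hkx : (k : ℝ) • x ∈ S m := hSsmul m k (by positivity) x hx
      have h1 := hFb m _ hkx
      rw [map_smul, smul_eq_mul] at h1
      have h2 : (k : ℝ) * F m x < c m := (div_lt_iff_of_neg hneg).mp hk
      linarith
    have hFl0 : ∀ m, F m ℓ < 0 := fun m => (hFl m).trans (hc0 m)
    set a : ℕ → (Fin N → ℝ) := fun m j => F m (Pi.single j (1:ℝ)) with ha
    have hFa : ∀ (m : ℕ) (x : Fin N → ℝ), F m x = ∑ j, a m j * x j := by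
      intro m x
      conv_lhs => rw [← Finset.univ_sum_single x, map_sum]
      refine Finset.sum_congr rfl fun j _ => ?_
      have : (Pi.single j (x j) : Fin N → ℝ) = x j • (Pi.single j (1:ℝ) : Fin N → ℝ) := by
        funext k
        by_cases h : k = j
        · subst h; simp
        · simp [Pi.single_apply, Ne.symm h, h]
      rw [this, map_smul, smul_eq_mul, ha, mul_comm]
    have ham : ∀ m, a m ≠ 0 := by
      intro m hm0
      have : F m ℓ = 0 := by
        rw [hFa]; simp [hm0]
      linarith [hFl0 m]
    set b : ℕ → (Fin N → ℝ) := fun m => ‖a m‖⁻¹ • a m with hb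
    have hbs : ∀ m, b m ∈ Metric.sphere (0 : Fin N → ℝ) 1 := by
      intro m
      rw [mem_sphere_zero_iff_norm, hb, norm_smul, norm_inv, norm_norm]
      exact inv_mul_cancel₀ (norm_ne_zero_iff.mpr (ham m))
    have hbv : ∀ (m i : ℕ), i ≤ m → 0 ≤ ∑ j, b m j * v i j := by
      intro m i him
      have h1 : 0 ≤ F m (v i) := hFpos m _ (hSv m i him)
      rw [hFa] at h1
      have : ∑ j, b m j * v i j = ‖a m‖⁻¹ * ∑ j, a m j * v i j := by
        rw [Finset.mul_sum]
        exact Finset.sum_congr rfl fun j _ => by simp [hb, mul_assoc]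
      rw [this]
      positivity
    have hbl : ∀ m, ∑ j, b m j * ℓ j ≤ 0 := by
      intro m
      have h1 : F m ℓ ≤ 0 := (hFl0 m).le
      rw [hFa] at h1
      have : ∑ j, b m j * ℓ j = ‖a m‖⁻¹ * ∑ j, a m j * ℓ j := by
        rw [Finset.mul_sum]
        exact Finset.sum_congr rfl fun j _ => by simp [hb, mul_assoc]
      rw [this]
      exact mul_nonpos_of_nonneg_of_nonpos (by positivity) h1
    obtain ⟨A, hA, φ, hφ, hconv⟩ :=
      (isCompact_sphere (0 : Fin N → ℝ) 1).tendsto_subseq hbs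
    have hAn : ‖A‖ = 1 := mem_sphere_zero_iff_norm.mp hA
    have hcont : ∀ x : Fin N → ℝ, Continuous (fun y : Fin N → ℝ => ∑ j, y j * x j) :=
      fun x => continuous_finset_sum _ fun j _ => (continuous_apply j).mul continuous_const
    have hAv : ∀ i, 0 ≤ ∑ j, A j * v i j := by
      intro i
      refine ge_of_tendsto (((hcont (v i)).tendsto A).comp hconv) ?_
      filter_upwards [Filter.eventually_ge_atTop i] with k hk
      exact hbv (φ k) i (hk.trans (hφ.le_apply))
    have hAl : ∑ j, A j * ℓ j ≤ 0 := by
      refine le_of_tendsto (((hcont ℓ).tendsto A).comp hconv) ?_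
      filter_upwards with k
      exact hbl (φ k)
    -- the contradiction with positivity of L
    set g : ↥Ω → ℝ := ∑ j, A j • f j with hg
    have hgx : ∀ x, g x = ∑ j, A j * f j x := by
      intro x
      rw [hg]
      simp [Finset.sum_apply]
    have hgspan : g ∈ Submodule.span ℝ (Set.range f) :=
      Submodule.sum_mem _ fun j _ =>
        Submodule.smul_mem _ _ (Submodule.subset_span ⟨j, rfl⟩)
    have hgcont : Continuous g := by
      have : g = fun x => ∑ j, A j * f j x := funext hgx
      rw [this]
      exact continuous_finset_sum _ fun j _ => continuous_const.mul (hf_cont j)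
    have hg0 : ∀ x, 0 ≤ g x := by
      have hcl : IsClosed {x : ↥Ω | 0 ≤ g x} :=
        isClosed_le continuous_const hgcont
      have hsub : Set.range P ⊆ {x : ↥Ω | 0 ≤ g x} := by
        rintro _ ⟨i, rfl⟩
        rw [Set.mem_setOf_eq, hgx]
        exact hAv i
      intro x
      have : x ∈ closure (Set.range P) := hP x
      exact (hcl.closure_subset_iff.mpr hsub) this
    have hgne : ∃ x, g x ≠ 0 := by
      by_contra hz
      push_neg at hz
      have : g = 0 := funext hz
      rw [hg] at this
      have hA0 := Fintype.linearIndependent_iff.mp hf_li A this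
      have : A = 0 := funext hA0
      rw [this] at hAn
      simp at hAn
    have hLg : L g = ∑ j, A j * ℓ j := by
      rw [hg, map_sum]
      exact Finset.sum_congr rfl fun j _ => by rw [map_smul, smul_eq_mul, hℓ]
    have := hLpos g hgspan hg0 hgne
    rw [hLg] at this
    linarith
  -- Conclusion via Carathéodory
  obtain ⟨m₀, hm₀⟩ := hkey
  refine ⟨m₀, fun m hm => ?_⟩
  obtain ⟨w, hw, hsum⟩ := hm₀
  -- ℓ ∈ S m
  have hℓm : ∃ w : ℕ → ℝ, (∀ i ∈ Finset.range (m+1), 0 ≤ w i) ∧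
      ℓ = ∑ i ∈ Finset.range (m+1), w i • v i := by
    refine ⟨fun i => if i ∈ Finset.range (m₀+1) then w i else 0, ?_, ?_⟩
    · intro i _
      by_cases h : i ∈ Finset.range (m₀+1)
      · simpa [h] using hw i h
      · simp [h]
    · rw [hsum]
      have hsub : Finset.range (m₀+1) ⊆ Finset.range (m+1) :=
        Finset.range_subset_range.mpr (by omega)
      rw [← Finset.sum_subset hsub (fun i _ hit => by simp [hit])]
      exact (Finset.sum_congr rfl fun i hi => by simp [hi]).symm
  obtain ⟨w1, hw1, hsum1⟩ := hℓm
  obtain ⟨t, hts, hli, w', hw', hsum'⟩ :=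
    cone_caratheodory v (Finset.range (m+1)).card (Finset.range (m+1)) le_rfl w1 hw1
  have hsumt : ∑ i ∈ t, w' i • v i = ℓ := by rw [hsum', ← hsum1]
  have hνN : t.card ≤ N := by
    have h1 := hli.fintype_card_le_finrank
    rwa [Fintype.card_coe, Module.finrank_fin_fun] at h1
  set e := t.orderIsoOfFin rfl with he
  refine ⟨t.card, hνN, fun k => P ((e k : ℕ)), fun k => w' ((e k : ℕ)), ?_, ?_, ?_⟩
  · intro k
    refine ⟨(e k : ℕ), ?_, rfl⟩
    have : ((e k : ℕ)) ∈ Finset.range (m+1) := hts (e k).2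
    exact Nat.lt_succ_iff.mp (Finset.mem_range.mp this)
  · intro k
    exact hw' _ (e k).2
  · intro g hg
    induction hg using Submodule.span_induction with
    | mem x h =>
        obtain ⟨j, rfl⟩ := h
        have hℓj : L (f j) = ℓ j := rfl
        rw [hℓj, ← hsumt]
        have h2 : (∑ i ∈ t, w' i • v i) j = ∑ i ∈ t, w' i * v i j := by
          rw [Finset.sum_apply]
          exact Finset.sum_congr rfl fun i _ => rfl
        rw [h2]
        rw [← Finset.sum_coe_sort t (fun i => w' i * v i j)]
        rw [← Equiv.sum_comp e.toEquiv (fun i : t => w' (i : ℕ) * v (i : ℕ) j)]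
        rfl
    | zero => simp
    | add x y hx hy ihx ihy =>
        rw [map_add, ihx, ihy, ← Finset.sum_add_distrib]
        exact Finset.sum_congr rfl fun k _ => by simp [mul_add]
    | smul r x hx ihx =>
        rw [map_smul, smul_eq_mul, ihx, Finset.mul_sum]
        refine Finset.sum_congr rfl fun k _ => ?_
        simp [Pi.smul_apply, smul_eq_mul]
        ring
end

section
/- Let J be a compact set, σ(J) > 0, and let I(f) = ∫_J f dσ be integration against a finite positive measure σ with total mass σ(J). Let X_M = {P₁,…,P_M} ⊂ J and L(f) = (σ(J)/M) Σ_{i=1}^{M} f(P_i) be the QMC functional. Let ℓ(f) = Σ_{k=1}^{ν} w_k f(Z_k) with w_k > 0 and Z_k ∈ X_M, and suppose ℓ(p) = L(p) for every p in a subspace P of continuous functions on J that contains the constant functions. Then for every continuous f on J, |ℓ(f) − I(f)| ≤ |L(f) − I(f)| + 2 σ(J) E(f; X_M) ≤ |L(f) − I(f)| + 2 σ(J) E(f; J), where E(f; K) = inf_{p ∈ P} max_{x ∈ K} |f(x) − p(x)|. -/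
open MeasureTheory

/-- **Error estimate for compressed QMC.** Let `J` be compact, `σ` a finite
positive measure on `J`, `L(f) = (σ(J)/M) Σᵢ f(Pᵢ)` the QMC functional on the
points `X_M = {P₁,…,P_M} ⊆ J`, and `ℓ(f) = Σₖ wₖ f(Zₖ)` a rule with positive
weights, nodes `Zₖ ∈ X_M`, matching `L` on a subspace `P ⊆ C(J)` containing the
constants. Then for every continuous `f`,
`|ℓ(f) − ∫f dσ| ≤ |L(f) − ∫f dσ| + 2 σ(J) E(f;X_M)` and
`|L(f) − ∫f dσ| + 2 σ(J) E(f;X_M) ≤ |L(f) − ∫f dσ| + 2 σ(J) E(f;J)`,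
where `E(f;K) = inf_{p ∈ P} sup_{x ∈ K} |f(x) − p(x)|`. -/
theorem compressed_qmc_error_estimate
    {J : Type*} [TopologicalSpace J] [CompactSpace J] [MeasurableSpace J]
    (σ : Measure J) [IsFiniteMeasure σ] (hσ : 0 < (σ Set.univ).toReal)
    {M : ℕ} (hM : 0 < M) (P : Fin M → J)
    (Psub : Submodule ℝ C(J, ℝ)) (hconst : (1 : C(J, ℝ)) ∈ Psub)
    {ν : ℕ} (w : Fin ν → ℝ) (hw : ∀ k, 0 < w k) (Z : Fin ν → J)
    (hZ : ∀ k, Z k ∈ Set.range P)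
    (hexact : ∀ p ∈ Psub,
      ∑ k, w k * p (Z k) = ((σ Set.univ).toReal / M) * ∑ i, p (P i))
    (f : C(J, ℝ)) :
    |(∑ k, w k * f (Z k)) - ∫ x, f x ∂σ| ≤
        |((σ Set.univ).toReal / M) * (∑ i, f (P i)) - ∫ x, f x ∂σ|
          + 2 * (σ Set.univ).toReal *
              (⨅ p : Psub, ⨆ i, |f (P i) - (p : C(J, ℝ)) (P i)|) ∧
      |((σ Set.univ).toReal / M) * (∑ i, f (P i)) - ∫ x, f x ∂σ|
          + 2 * (σ Set.univ).toReal *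
              (⨅ p : Psub, ⨆ i, |f (P i) - (p : C(J, ℝ)) (P i)|) ≤
        |((σ Set.univ).toReal / M) * (∑ i, f (P i)) - ∫ x, f x ∂σ|
          + 2 * (σ Set.univ).toReal *
              (⨅ p : Psub, ⨆ x, |f x - (p : C(J, ℝ)) x|) := by
  haveI : Nonempty J := ⟨P ⟨0, hM⟩⟩
  haveI : Nonempty (Fin M) := ⟨⟨0, hM⟩⟩
  haveI : Nonempty Psub := ⟨0⟩
  set c : ℝ := (σ Set.univ).toReal with hc
  have hc0 : (0 : ℝ) ≤ c := hσ.le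
  -- sum of weights is c
  have hM0 : (M:ℝ) ≠ 0 := Nat.cast_ne_zero.mpr hM.ne'
  have hsumw : ∑ k, w k = c := by
    have h1 := hexact 1 hconst
    simp only [ContinuousMap.one_apply, mul_one, Finset.sum_const,
      Finset.card_univ, Fintype.card_fin, nsmul_eq_mul] at h1
    rwa [div_mul_cancel₀ c hM0] at h1
  -- abbreviations
  set S : Psub → ℝ := fun p => ⨆ i, |f (P i) - (p : C(J, ℝ)) (P i)| with hS
  have hSnonneg : ∀ p, 0 ≤ S p := by
    intro p
    have hbd : BddAbove (Set.range fun i => |f (P i) - (p : C(J, ℝ)) (P i)|) :=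
      Set.Finite.bddAbove (Set.finite_range _)
    exact le_ciSup_of_le hbd (Classical.arbitrary (Fin M)) (abs_nonneg _)
  have hSle : ∀ (p : Psub) (x : J), x ∈ Set.range P →
      |f x - (p : C(J, ℝ)) x| ≤ S p := by
    rintro p x ⟨i, rfl⟩
    exact le_ciSup (f := fun i => |f (P i) - (p : C(J, ℝ)) (P i)|)
      (Set.Finite.bddAbove (Set.finite_range _)) i
  -- key bound: |ℓ f - L f| ≤ 2 c S p for each p
  have hkey : ∀ p : Psub,
      |(∑ k, w k * f (Z k)) - ((c / M) * ∑ i, f (P i))| ≤ 2 * c * S p := by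
    intro p
    have hp := hexact p p.2
    have heq : (∑ k, w k * f (Z k)) - ((c / M) * ∑ i, f (P i))
        = (∑ k, w k * (f (Z k) - (p : C(J, ℝ)) (Z k)))
          - ((c / M) * ∑ i, (f (P i) - (p : C(J, ℝ)) (P i))) := by
      simp only [mul_sub, Finset.sum_sub_distrib]
      rw [hp]
      ring
    rw [heq]
    have h1 : |∑ k, w k * (f (Z k) - (p : C(J, ℝ)) (Z k))| ≤ c * S p := by
      calc |∑ k, w k * (f (Z k) - (p : C(J, ℝ)) (Z k))|
          ≤ ∑ k, |w k * (f (Z k) - (p : C(J, ℝ)) (Z k))| :=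
            Finset.abs_sum_le_sum_abs _ _
        _ ≤ ∑ k, w k * S p := by
            apply Finset.sum_le_sum
            intro k _
            rw [abs_mul, abs_of_pos (hw k)]
            exact mul_le_mul_of_nonneg_left (hSle p _ (hZ k)) (hw k).le
        _ = c * S p := by rw [← Finset.sum_mul, hsumw]
    have h2 : |(c / M) * ∑ i, (f (P i) - (p : C(J, ℝ)) (P i))| ≤ c * S p := by
      have hcM : (0:ℝ) ≤ c / M := div_nonneg hc0 (Nat.cast_nonneg M)
      calc |(c / M) * ∑ i, (f (P i) - (p : C(J, ℝ)) (P i))|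
          = (c / M) * |∑ i, (f (P i) - (p : C(J, ℝ)) (P i))| := by
            rw [abs_mul, abs_of_nonneg hcM]
        _ ≤ (c / M) * ∑ i, |f (P i) - (p : C(J, ℝ)) (P i)| :=
            mul_le_mul_of_nonneg_left (Finset.abs_sum_le_sum_abs _ _) hcM
        _ ≤ (c / M) * ∑ _i : Fin M, S p := by
            apply mul_le_mul_of_nonneg_left _ hcM
            exact Finset.sum_le_sum fun i _ => hSle p _ ⟨i, rfl⟩
        _ = c * S p := by
            rw [Finset.sum_const, Finset.card_univ, Fintype.card_fin,
              nsmul_eq_mul]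
            field_simp
    calc |(∑ k, w k * (f (Z k) - (p : C(J, ℝ)) (Z k)))
          - ((c / M) * ∑ i, (f (P i) - (p : C(J, ℝ)) (P i)))|
        ≤ |∑ k, w k * (f (Z k) - (p : C(J, ℝ)) (Z k))|
          + |(c / M) * ∑ i, (f (P i) - (p : C(J, ℝ)) (P i))| := abs_sub _ _
      _ ≤ c * S p + c * S p := add_le_add h1 h2
      _ = 2 * c * S p := by ring
  constructor
  · have hbound : |(∑ k, w k * f (Z k)) - ((c / M) * ∑ i, f (P i))|
        ≤ 2 * c * ⨅ p : Psub, S p := by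
      rw [Real.mul_iInf_of_nonneg (by positivity : (0:ℝ) ≤ 2 * c)]
      exact le_ciInf hkey
    calc |(∑ k, w k * f (Z k)) - ∫ x, f x ∂σ|
        ≤ |(∑ k, w k * f (Z k)) - ((c / M) * ∑ i, f (P i))|
          + |((c / M) * ∑ i, f (P i)) - ∫ x, f x ∂σ| := abs_sub_le _ _ _
      _ ≤ 2 * c * (⨅ p : Psub, S p)
          + |((c / M) * ∑ i, f (P i)) - ∫ x, f x ∂σ| :=
          add_le_add_left hbound _
      _ = |((c / M) * ∑ i, f (P i)) - ∫ x, f x ∂σ|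
          + 2 * c * (⨅ p : Psub, S p) := by ring
  · apply add_le_add_right
    apply mul_le_mul_of_nonneg_left _ (by positivity : (0:ℝ) ≤ 2 * c)
    apply ciInf_mono
    · exact ⟨0, by rintro _ ⟨p, rfl⟩; exact hSnonneg p⟩
    · intro p
      apply ciSup_le
      intro i
      have hbd : BddAbove (Set.range fun x => |f x - (p : C(J, ℝ)) x|) := by
        have : IsCompact (Set.range fun x => |f x - (p : C(J, ℝ)) x|) :=
          isCompact_range (by continuity)
        exact this.bddAbove
      exact le_ciSup hbd (P i)
end
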